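/- arXiv:1811.04500 — 2 statements merged into one kernel-verified Lean document; each statement's English description precedes it below -/
import Mathlib

section
/- Let Y₁,…,Yₙ be i.i.d. square-integrable random variables and φ a symmetric function of n arguments with E[φ(Y₁,…,Yₙ)²] < ∞. Then Var[E[φ(Y₁,…,Yₙ) | Y₁]] ≤ Var[φ(Y₁,…,Yₙ)] / n. -/
open MeasureTheory ProbabilityTheory Function

namespace HajekAux

variable {n : ℕ} (ν : Measure ℝ) [IsProbabilityMeasure ν]

lemma mp_update (i : Fin n) :
    MeasurePreserving (fun p : (Fin n → ℝ) × ℝ => Function.update p.1 i p.2)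
      ((Measure.pi fun _ : Fin n => ν).prod ν) (Measure.pi fun _ : Fin n => ν) := by
  refine ⟨measurable_update', ?_⟩
  refine (Measure.pi_eq (μ := fun _ : Fin n => ν) fun s hs => ?_).symm
  rw [Measure.map_apply measurable_update' (MeasurableSet.univ_pi hs)]
  have hset : (fun p : (Fin n → ℝ) × ℝ => Function.update p.1 i p.2) ⁻¹' (Set.pi Set.univ s)
      = (Set.pi Set.univ (Function.update s i Set.univ)) ×ˢ (s i) := by
    ext p
    simp only [Set.mem_preimage, Set.mem_pi, Set.mem_univ, true_implies, Set.mem_prod]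
    constructor
    · intro h
      refine ⟨fun j => ?_, by simpa using h i⟩
      rcases eq_or_ne j i with rfl | hj
      · simp
      · simpa [Function.update_of_ne hj] using h j
    · rintro ⟨h1, h2⟩ j
      rcases eq_or_ne j i with rfl | hj
      · simpa using h2
      · simpa [Function.update_of_ne hj] using h1 j
  rw [hset, Measure.prod_prod, Measure.pi_pi]
  calc (∏ j, ν (Function.update s i Set.univ j)) * ν (s i)
      = (∏ j, Function.update (fun j => ν (s j)) i (ν Set.univ) j) * ν (s i) := by
        congr 1
        refine Finset.prod_congr rfl fun j _ => ?_
        rcases eq_or_ne j i with rfl | hj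
        · simp
        · simp [Function.update_of_ne hj]
    _ = ∏ j, ν (s j) := by
        rw [Finset.prod_update_of_mem (Finset.mem_univ i)]
        simp only [measure_univ, one_mul]
        rw [Finset.sdiff_singleton_eq_erase]
        exact Finset.prod_erase_mul Finset.univ (fun j => ν (s j)) (Finset.mem_univ i)

lemma mp_perm (σ : Equiv.Perm (Fin n)) :
    MeasurePreserving (fun z : Fin n → ℝ => z ∘ σ)
      (Measure.pi fun _ : Fin n => ν) (Measure.pi fun _ : Fin n => ν) := by
  have h := measurePreserving_piCongrLeft (fun _ : Fin n => ν) σ.symm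
  have hco : ⇑(MeasurableEquiv.piCongrLeft (fun _ : Fin n => ℝ) σ.symm)
      = fun z : Fin n → ℝ => z ∘ σ := by
    funext z
    funext j
    rw [MeasurableEquiv.coe_piCongrLeft]
    have := Equiv.piCongrLeft_apply_apply (fun _ : Fin n => ℝ) σ.symm z (σ j)
    simpa using this
  rwa [hco] at h

lemma mp_eval (i : Fin n) :
    MeasurePreserving (fun ω : Fin n → ℝ => ω i) (Measure.pi fun _ : Fin n => ν) ν := by
  refine ⟨measurable_pi_apply i, ?_⟩
  have h := (mp_update ν i).map_eq
  have hc : (fun ω : Fin n → ℝ => ω i) ∘ (fun p : (Fin n → ℝ) × ℝ => Function.update p.1 i p.2)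
      = Prod.snd := by funext p; simp
  conv_lhs => rw [← h, Measure.map_map (measurable_pi_apply i) measurable_update', hc]
  simp

lemma mp_fst {α β : Type*} [MeasurableSpace α] [MeasurableSpace β]
    (μ : Measure α) (κ : Measure β) [SFinite μ] [IsProbabilityMeasure κ] :
    MeasurePreserving (Prod.fst : α × β → α) (μ.prod κ) μ :=
  ⟨measurable_fst, by simp⟩

lemma mp_snd {α β : Type*} [MeasurableSpace α] [MeasurableSpace β]
    (μ : Measure α) (κ : Measure β) [IsProbabilityMeasure μ] [SFinite κ] :
    MeasurePreserving (Prod.snd : α × β → β) (μ.prod κ) κ :=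
  ⟨measurable_snd, by simp⟩

lemma l2_mul_integrable {α : Type*} [MeasurableSpace α] {μ : Measure α} {f g : α → ℝ}
    (hf : MemLp f 2 μ) (hg : MemLp g 2 μ) :
    Integrable (fun x => f x * g x) μ := by
  have h := hf.smul (φ := g) hg (p := 2) (q := 2) (r := 1)
  rw [memLp_one_iff_integrable] at h
  simpa [smul_eq_mul, mul_comm, Pi.mul_def] using h

lemma integral_comp_mp {α β : Type*} [MeasurableSpace α] [MeasurableSpace β]
    {μ : Measure α} {κ : Measure β} {T : α → β} (hT : MeasurePreserving T μ κ)
    {f : β → ℝ} (hf : AEStronglyMeasurable f κ) :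
    ∫ a, f (T a) ∂μ = ∫ b, f b ∂κ := by
  rw [← hT.map_eq] at hf ⊢
  exact (integral_map hT.measurable.aemeasurable hf).symm

end HajekAux

open HajekAux

/-- For i.i.d. square-integrable `Y₁,…,Yₙ` (modeled as coordinates of the product
measure `ν^{⊗n}`) and a symmetric square-integrable function `φ`, the variance of
the Hájek projection `E[φ(Y₁,…,Yₙ) | Y₁]` is at most `Var[φ(Y₁,…,Yₙ)] / n`. -/
theorem variance_hajek_projection_le
    {n : ℕ} (hn : 0 < n) (ν : Measure ℝ) [IsProbabilityMeasure ν]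
    (φ : (Fin n → ℝ) → ℝ) (hmeas : Measurable φ)
    (hL2 : MemLp φ 2 (Measure.pi fun _ : Fin n => ν))
    (hsym : ∀ (σ : Equiv.Perm (Fin n)) (y : Fin n → ℝ), φ (y ∘ σ) = φ y) :
    variance
        (fun ω : Fin n → ℝ =>
          ∫ z, φ (Function.update z ⟨0, hn⟩ (ω ⟨0, hn⟩))
            ∂(Measure.pi fun _ : Fin n => ν))
        (Measure.pi fun _ : Fin n => ν)
      ≤ variance φ (Measure.pi fun _ : Fin n => ν) / n := by
  classical
  set i0 : Fin n := ⟨0, hn⟩ with hi0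
  set μ : Measure (Fin n → ℝ) := Measure.pi fun _ : Fin n => ν with hμdef
  haveI : IsProbabilityMeasure μ := by rw [hμdef]; infer_instance
  have hT : ∀ i : Fin n, MeasurePreserving
      (fun p : (Fin n → ℝ) × ℝ => Function.update p.1 i p.2) (μ.prod ν) μ :=
    fun i => mp_update ν i
  set m : ℝ := ∫ ω, φ ω ∂μ with hm
  have hφint : Integrable φ μ := hL2.integrable one_le_two
  set ψ : (Fin n → ℝ) → ℝ := fun ω => φ ω - m with hψdef
  have hψmeas : Measurable ψ := hmeas.sub measurable_const
  have hψL2 : MemLp ψ 2 μ := hL2.sub (memLp_const m)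
  have hψint : Integrable ψ μ := hψL2.integrable one_le_two
  have hψsq : Integrable (fun ω => ψ ω ^ 2) μ := hψL2.integrable_sq
  set G : ℝ → ℝ := fun x => ∫ z, φ (Function.update z i0 x) ∂μ with hGdef
  set g : ℝ → ℝ := fun x => G x - m with hgdef
  have hGsm : StronglyMeasurable G := by
    have hsm : StronglyMeasurable fun p : (Fin n → ℝ) × ℝ => φ (Function.update p.1 i0 p.2) :=
      (hmeas.comp measurable_update').stronglyMeasurable
    exact hsm.integral_prod_left'
  have hgsm : StronglyMeasurable g := hGsm.sub stronglyMeasurable_const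
  -- Fubini integrability facts
  have hFint : Integrable (fun p : (Fin n → ℝ) × ℝ => φ (Function.update p.1 i0 p.2)) (μ.prod ν) := by
    rw [← memLp_one_iff_integrable] at hφint ⊢
    exact hφint.comp_measurePreserving (hT i0)
  have hFψL2 : ∀ i : Fin n,
      MemLp (fun p : (Fin n → ℝ) × ℝ => ψ (Function.update p.1 i p.2)) 2 (μ.prod ν) :=
    fun i => hψL2.comp_measurePreserving (hT i)
  have hFψsq : Integrable
      (fun p : (Fin n → ℝ) × ℝ => ψ (Function.update p.1 i0 p.2) ^ 2) (μ.prod ν) :=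
    (hFψL2 i0).integrable_sq
  have hsec : ∀ᵐ x ∂ν, Integrable (fun z => φ (Function.update z i0 x)) μ :=
    hFint.prod_left_ae
  have hsecsq : ∀ᵐ x ∂ν, Integrable (fun z => ψ (Function.update z i0 x) ^ 2) μ :=
    hFψsq.prod_left_ae
  have hgae : ∀ᵐ x ∂ν, (∫ z, ψ (Function.update z i0 x) ∂μ) = g x := by
    filter_upwards [hsec] with x hx
    rw [hψdef]
    rw [integral_sub hx (integrable_const m)]
    simp [hgdef, hGdef]
  have hjensen : ∀ᵐ x ∂ν, g x ^ 2 ≤ ∫ z, ψ (Function.update z i0 x) ^ 2 ∂μ := by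
    filter_upwards [hsecsq, hgae] with x hx2 hxg
    have hmem : MemLp (fun z => ψ (Function.update z i0 x)) 2 μ :=
      (memLp_two_iff_integrable_sq
        ((hψmeas.comp measurable_update_left).aestronglyMeasurable)).2 hx2
    have h0 := variance_nonneg (fun z => ψ (Function.update z i0 x)) μ
    rw [variance_eq_sub hmem] at h0
    have h1 : (∫ z, ψ (Function.update z i0 x) ∂μ) ^ 2
        ≤ ∫ z, ψ (Function.update z i0 x) ^ 2 ∂μ := by
      have h2 := sub_nonneg.mp h0
      simpa using h2
    rw [hxg] at h1
    exact h1
  have hkint : Integrable (fun x => ∫ z, ψ (Function.update z i0 x) ^ 2 ∂μ) ν :=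
    hFψsq.integral_prod_right
  have hg2int : Integrable (fun x => g x ^ 2) ν := by
    refine hkint.mono' ((hgsm.measurable.pow_const 2).aestronglyMeasurable) ?_
    filter_upwards [hjensen] with x hx
    rw [Real.norm_eq_abs, abs_of_nonneg (sq_nonneg _)]
    exact hx
  have hgL2 : MemLp g 2 ν := (memLp_two_iff_integrable_sq hgsm.aestronglyMeasurable).2 hg2int
  have hGint : Integrable G ν := hFint.integral_prod_right
  -- mean computations
  have hGν : ∫ x, G x ∂ν = m := by
    have h2 := integral_integral_swap
      (f := fun (z : Fin n → ℝ) (x : ℝ) => φ (Function.update z i0 x)) hFint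
    have h1 := integral_integral
      (f := fun (z : Fin n → ℝ) (x : ℝ) => φ (Function.update z i0 x)) hFint
    have h3 : ∫ p : (Fin n → ℝ) × ℝ, φ (Function.update p.1 i0 p.2) ∂(μ.prod ν)
        = ∫ ω, φ ω ∂μ := integral_comp_mp (hT i0) hmeas.aestronglyMeasurable
    calc ∫ x, G x ∂ν = ∫ x, ∫ z, φ (Function.update z i0 x) ∂μ ∂ν := rfl
      _ = ∫ z, ∫ x, φ (Function.update z i0 x) ∂ν ∂μ := h2.symm
      _ = ∫ p : (Fin n → ℝ) × ℝ, φ (Function.update p.1 i0 p.2) ∂(μ.prod ν) := h1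
      _ = m := h3
  have hgν0 : ∫ x, g x ∂ν = 0 := by
    rw [hgdef]
    rw [integral_sub hGint (integrable_const m)]
    simp [hGν]
  set w : ℝ := ∫ x, g x ^ 2 ∂ν with hw
  -- symmetry : conditional integral on any coordinate is g
  have hψsym : ∀ (σ : Equiv.Perm (Fin n)) (y : Fin n → ℝ), ψ (y ∘ σ) = ψ y := by
    intro σ y; simp only [hψdef, hsym σ y]
  have hJψ : ∀ i : Fin n, ∀ᵐ x ∂ν, (∫ z, ψ (Function.update z i x) ∂μ) = g x := by
    intro i
    have key : ∀ x : ℝ, (∫ z, ψ (Function.update z i x) ∂μ)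
        = ∫ z, ψ (Function.update z i0 x) ∂μ := by
      intro x
      have hupd : ∀ z : Fin n → ℝ, Function.update z i x
          = (Function.update (z ∘ (Equiv.swap i i0)) i0 x) ∘ (Equiv.swap i i0) := by
        intro z
        funext j
        rcases eq_or_ne j i with rfl | hj
        · simp only [Function.comp_apply, Function.update_self]
          rw [Equiv.swap_apply_left]
          simp
        · have h1 : (Equiv.swap i i0) j ≠ i0 := by
            intro h
            apply hj
            have h2 := congrArg (Equiv.swap i i0) h
            simpa [Equiv.swap_apply_self, Equiv.swap_apply_right] using h2
          simp only [Function.comp_apply, Function.update_of_ne hj,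
            Function.update_of_ne h1]
          simp [Equiv.swap_apply_self]
      calc ∫ z, ψ (Function.update z i x) ∂μ
          = ∫ z, (fun w => ψ (Function.update w i0 x)) (z ∘ (Equiv.swap i i0)) ∂μ := by
            refine integral_congr_ae (Filter.Eventually.of_forall fun z => ?_)
            show ψ (Function.update z i x) = ψ (Function.update (z ∘ (Equiv.swap i i0)) i0 x)
            rw [hupd z]
            exact hψsym _ _
        _ = ∫ z, ψ (Function.update z i0 x) ∂μ :=
            integral_comp_mp (mp_perm ν (Equiv.swap i i0))
              ((hψmeas.comp measurable_update_left).aestronglyMeasurable)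
    filter_upwards [hgae] with x hx
    rw [key x, hx]
  -- L2 facts about coordinates
  have hGiL2 : ∀ i : Fin n, MemLp (fun ω : Fin n → ℝ => g (ω i)) 2 μ := by
    intro i
    exact hgL2.comp_measurePreserving (mp_eval ν i)
  have hGiMeas : ∀ i : Fin n, Measurable fun ω : Fin n → ℝ => g (ω i) :=
    fun i => hgsm.measurable.comp (measurable_pi_apply i)
  -- F2
  have F2 : ∀ i : Fin n, ∫ ω, g (ω i) ^ 2 ∂μ = w := by
    intro i
    exact integral_comp_mp (mp_eval ν i)
      ((hgsm.measurable.pow_const 2).aestronglyMeasurable)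
  -- F3
  have F3 : ∀ i j : Fin n, j ≠ i → ∫ ω, g (ω i) * g (ω j) ∂μ = 0 := by
    intro i j hij
    have hmul3 : Integrable (Function.uncurry
        fun (z : Fin n → ℝ) (x : ℝ) => g x * g (z j)) (μ.prod ν) := by
      exact l2_mul_integrable
        (hgL2.comp_measurePreserving (mp_snd μ ν))
        ((hGiL2 j).comp_measurePreserving (mp_fst μ ν))
    have h := integral_comp_mp (hT i)
      (f := fun ω : Fin n → ℝ => g (ω i) * g (ω j))
      (((hGiMeas i).mul (hGiMeas j)).aestronglyMeasurable)
    calc ∫ ω, g (ω i) * g (ω j) ∂μ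
        = ∫ p : (Fin n → ℝ) × ℝ,
            g (Function.update p.1 i p.2 i) * g (Function.update p.1 i p.2 j) ∂(μ.prod ν) :=
          h.symm
      _ = ∫ p : (Fin n → ℝ) × ℝ, g p.2 * g (p.1 j) ∂(μ.prod ν) := by
          simp only [Function.update_self, Function.update_of_ne hij]
      _ = ∫ z, ∫ x, g x * g (z j) ∂ν ∂μ := (integral_integral hmul3).symm
      _ = ∫ z : Fin n → ℝ, (0 : ℝ) ∂μ := by
          refine integral_congr_ae (Filter.Eventually.of_forall fun z => ?_)
          show (∫ x, g x * g (z j) ∂ν) = (0 : ℝ)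
          rw [integral_mul_const, hgν0, zero_mul]
      _ = 0 := integral_zero _ _
  -- F4
  have F4 : ∀ i : Fin n, ∫ ω, ψ ω * g (ω i) ∂μ = w := by
    intro i
    have hmul : Integrable (Function.uncurry
        fun (z : Fin n → ℝ) (x : ℝ) => ψ (Function.update z i x) * g x) (μ.prod ν) := by
      exact l2_mul_integrable (hFψL2 i) (hgL2.comp_measurePreserving (mp_snd μ ν))
    have h := integral_comp_mp (hT i)
      (f := fun ω : Fin n → ℝ => ψ ω * g (ω i))
      ((hψmeas.mul (hGiMeas i)).aestronglyMeasurable)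
    have hinner : ∀ᵐ x ∂ν, (∫ z, ψ (Function.update z i x) * g x ∂μ) = g x ^ 2 := by
      filter_upwards [hJψ i] with x hx
      rw [integral_mul_const, hx, sq]
    calc ∫ ω, ψ ω * g (ω i) ∂μ
        = ∫ p : (Fin n → ℝ) × ℝ,
            ψ (Function.update p.1 i p.2) * g (Function.update p.1 i p.2 i) ∂(μ.prod ν) :=
          h.symm
      _ = ∫ p : (Fin n → ℝ) × ℝ,
            ψ (Function.update p.1 i p.2) * g p.2 ∂(μ.prod ν) := by
          simp only [Function.update_self]
      _ = ∫ z, ∫ x, ψ (Function.update z i x) * g x ∂ν ∂μ := (integral_integral hmul).symm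
      _ = ∫ x, ∫ z, ψ (Function.update z i x) * g x ∂μ ∂ν := integral_integral_swap hmul
      _ = ∫ x, g x ^ 2 ∂ν := integral_congr_ae hinner
      _ = w := rfl
  -- the sum S
  set S : (Fin n → ℝ) → ℝ := fun ω => ∑ i : Fin n, g (ω i) with hSdef
  have hSL2 : MemLp S 2 μ := by
    exact memLp_finset_sum Finset.univ (fun i _ => hGiL2 i)
  have hψgi : ∀ i : Fin n, Integrable (fun ω => ψ ω * g (ω i)) μ :=
    fun i => l2_mul_integrable hψL2 (hGiL2 i)
  have hgigj : ∀ i j : Fin n, Integrable (fun ω => g (ω i) * g (ω j)) μ :=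
    fun i j => l2_mul_integrable (hGiL2 i) (hGiL2 j)
  have hψS : Integrable (fun ω => ψ ω * S ω) μ := l2_mul_integrable hψL2 hSL2
  have hSS : Integrable (fun ω => S ω * S ω) μ := l2_mul_integrable hSL2 hSL2
  have hψSint : ∫ ω, ψ ω * S ω ∂μ = n * w := by
    calc ∫ ω, ψ ω * S ω ∂μ = ∫ ω, ∑ i : Fin n, ψ ω * g (ω i) ∂μ := by
          refine integral_congr_ae (Filter.Eventually.of_forall fun ω => ?_)
          show ψ ω * (∑ i : Fin n, g (ω i)) = ∑ i : Fin n, ψ ω * g (ω i)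
          rw [Finset.mul_sum]
      _ = ∑ i : Fin n, ∫ ω, ψ ω * g (ω i) ∂μ :=
          integral_finset_sum _ (fun i _ => hψgi i)
      _ = ∑ _i : Fin n, w := Finset.sum_congr rfl fun i _ => F4 i
      _ = n * w := by simp [Finset.card_univ, nsmul_eq_mul]
  have hSSint : ∫ ω, S ω * S ω ∂μ = n * w := by
    calc ∫ ω, S ω * S ω ∂μ
        = ∫ ω, ∑ i : Fin n, ∑ j : Fin n, g (ω i) * g (ω j) ∂μ := by
          refine integral_congr_ae (Filter.Eventually.of_forall fun ω => ?_)
          show (∑ i : Fin n, g (ω i)) * (∑ j : Fin n, g (ω j))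
            = ∑ i : Fin n, ∑ j : Fin n, g (ω i) * g (ω j)
          rw [Finset.sum_mul_sum]
      _ = ∑ i : Fin n, ∫ ω, ∑ j : Fin n, g (ω i) * g (ω j) ∂μ :=
          integral_finset_sum _ (fun i _ => integrable_finset_sum _ (fun j _ => hgigj i j))
      _ = ∑ _i : Fin n, w := by
          refine Finset.sum_congr rfl fun i _ => ?_
          rw [integral_finset_sum _ (fun j _ => hgigj i j)]
          rw [Finset.sum_eq_single i (fun j _ hji => F3 i j hji)
            (fun h => absurd (Finset.mem_univ i) h)]
          simpa [pow_two] using F2 i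
      _ = n * w := by simp [Finset.card_univ, nsmul_eq_mul]
  -- the key inequality
  have hkey : (n : ℝ) * w ≤ ∫ ω, ψ ω ^ 2 ∂μ := by
    have h0 : 0 ≤ ∫ ω, (ψ ω - S ω) ^ 2 ∂μ :=
      integral_nonneg fun ω => sq_nonneg _
    have hexp : ∫ ω, (ψ ω - S ω) ^ 2 ∂μ
        = (∫ ω, ψ ω ^ 2 ∂μ) - 2 * ((n : ℝ) * w) + (n : ℝ) * w := by
      calc ∫ ω, (ψ ω - S ω) ^ 2 ∂μ
          = ∫ ω, (ψ ω ^ 2 - 2 * (ψ ω * S ω) + S ω * S ω) ∂μ := by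
            refine integral_congr_ae (Filter.Eventually.of_forall fun ω => ?_)
            ring
        _ = (∫ ω, (ψ ω ^ 2 - 2 * (ψ ω * S ω)) ∂μ) + ∫ ω, S ω * S ω ∂μ :=
            integral_add (hψsq.sub (hψS.const_mul 2)) hSS
        _ = ((∫ ω, ψ ω ^ 2 ∂μ) - ∫ ω, 2 * (ψ ω * S ω) ∂μ) + ∫ ω, S ω * S ω ∂μ := by
            rw [integral_sub hψsq (hψS.const_mul 2)]
        _ = (∫ ω, ψ ω ^ 2 ∂μ) - 2 * ((n : ℝ) * w) + (n : ℝ) * w := by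
            rw [integral_const_mul, hψSint, hSSint]
    rw [hexp] at h0
    linarith
  -- variance identifications
  have hXL2 : MemLp (fun ω : Fin n → ℝ => G (ω i0)) 2 μ := by
    have hGL2' : MemLp G 2 ν := by
      have hadd := hgL2.add (memLp_const m)
      have hGeq : G = fun x => g x + m := by
        funext x; rw [hgdef]; ring
      rw [hGeq]
      exact hadd
    exact hGL2'.comp_measurePreserving (mp_eval ν i0)
  have hXmean : ∫ ω, G (ω i0) ∂μ = m :=
    (integral_comp_mp (mp_eval ν i0) hGsm.aestronglyMeasurable).trans hGν
  have hG2int : Integrable (fun x => G x ^ 2) ν := by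
    have hGL2' : MemLp G 2 ν := by
      have hadd := hgL2.add (memLp_const m)
      have hGeq : G = fun x => g x + m := by
        funext x; rw [hgdef]; ring
      rw [hGeq]; exact hadd
    exact hGL2'.integrable_sq
  have hw_alt : w = (∫ x, G x ^ 2 ∂ν) - m ^ 2 := by
    calc w = ∫ x, (G x ^ 2 - 2 * m * G x + m ^ 2) ∂ν := by
          refine integral_congr_ae (Filter.Eventually.of_forall fun x => ?_)
          rw [hgdef]; ring
      _ = (∫ x, (G x ^ 2 - 2 * m * G x) ∂ν) + ∫ x, (m ^ 2 : ℝ) ∂ν :=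
          integral_add (hG2int.sub (hGint.const_mul (2 * m))) (integrable_const _)
      _ = ((∫ x, G x ^ 2 ∂ν) - ∫ x, 2 * m * G x ∂ν) + m ^ 2 := by
          rw [integral_sub hG2int (hGint.const_mul (2 * m)), integral_const]
          simp
      _ = (∫ x, G x ^ 2 ∂ν) - m ^ 2 := by
          rw [integral_const_mul, hGν]; ring
  have hVarX : variance (fun ω : Fin n → ℝ => G (ω i0)) μ = w := by
    rw [variance_eq_sub hXL2]
    have h1 : μ[(fun ω : Fin n → ℝ => G (ω i0)) ^ 2] = ∫ x, G x ^ 2 ∂ν := by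
      exact integral_comp_mp (mp_eval ν i0)
        ((hGsm.measurable.pow_const 2).aestronglyMeasurable)
    have h2 : μ[fun ω : Fin n → ℝ => G (ω i0)] = m := hXmean
    rw [h1, h2, hw_alt]
  have hVarφ : variance φ μ = ∫ ω, ψ ω ^ 2 ∂μ := by
    refine (variance_eq_integral hmeas.aemeasurable).trans ?_
    refine integral_congr_ae (Filter.Eventually.of_forall fun ω => ?_)
    simp [hψdef, hm]
  show variance (fun ω : Fin n → ℝ => G (ω i0)) μ ≤ variance φ μ / n
  rw [hVarX, hVarφ, le_div_iff₀ (by exact_mod_cast hn : (0:ℝ) < n)]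
  calc w * n = (n : ℝ) * w := by ring
    _ ≤ ∫ ω, ψ ω ^ 2 ∂μ := hkey
end

section
/- Let X₁,…,X_n be i.i.d. with distribution F on a measurable space, let F̂ₙ denote the empirical distribution, and let h : Ξ^k → ℝ be bounded and measurable with the zero-marginal-mean property: ∫ h(x₁,…,x_k) dF(x_t) = 0 for every coordinate t and all values of the other coordinates. Then E[(∫ h d(F̂ₙ)^{⊗k})²] ≤ C·‖h‖_∞²·n^{−k}, where C depends only on k. -/
open MeasureTheory

lemma aux_integrable_of_bound {δ : Type*} [MeasurableSpace δ] (μ : Measure δ)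
    [IsFiniteMeasure μ] (f : δ → ℝ) (hf : Measurable f) (C : ℝ) (hC : ∀ x, |f x| ≤ C) :
    Integrable f μ := by
  refine Integrable.mono' (integrable_const C) hf.aestronglyMeasurable
    (Filter.Eventually.of_forall fun x => ?_)
  simpa [Real.norm_eq_abs] using hC x

lemma aux_insertNth_comp (n : ℕ) {α : Type*} (i : Fin (n+1)) (y : α) (ω : Fin (n+1) → α) :
    i.insertNth y (fun j => ω (i.succAbove j)) = Function.update ω i y := by
  funext s
  rcases eq_or_ne s i with rfl | hs
  · simp
  · obtain ⟨j, rfl⟩ := Fin.exists_succAbove_eq hs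
    simp [Function.update_of_ne (Fin.succAbove_ne i j)]

lemma aux_pi_integral_update {α : Type*} [MeasurableSpace α] (ν : Measure α)
    [IsProbabilityMeasure ν] {n : ℕ} (i : Fin (n+1)) (f : (Fin (n+1) → α) → ℝ)
    (hf : Measurable f) (C : ℝ) (hC : ∀ ω, |f ω| ≤ C) :
    ∫ ω, f ω ∂(Measure.pi fun _ : Fin (n+1) => ν)
      = ∫ ω, (∫ y, f (Function.update ω i y) ∂ν) ∂(Measure.pi fun _ : Fin (n+1) => ν) := by
  set π := Measure.pi fun _ : Fin (n+1) => ν with hπ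
  set π' := Measure.pi fun _ : Fin n => ν with hπ'
  set e := MeasurableEquiv.piFinSuccAbove (fun _ : Fin (n+1) => α) i with he
  have MP : MeasurePreserving e π (ν.prod π') :=
    measurePreserving_piFinSuccAbove (fun _ : Fin (n+1) => ν) i
  set F : α × (Fin n → α) → ℝ := fun p => f (e.symm p) with hF
  have hFm : Measurable F := hf.comp e.symm.measurable
  have hFi : Integrable F (ν.prod π') := aux_integrable_of_bound _ F hFm C fun x => hC _
  have h1 : ∫ ω, f ω ∂π = ∫ p, F p ∂(ν.prod π') := by
    rw [← MP.integral_comp']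
    simp [F]
  have h2 : ∫ p, F p ∂(ν.prod π') = ∫ ω', (∫ y, F (y, ω') ∂ν) ∂π' :=
    integral_prod_symm F hFi
  set G : (Fin n → α) → ℝ := fun ω' => ∫ y, F (y, ω') ∂ν with hG
  have hGsm : StronglyMeasurable G := hFm.stronglyMeasurable.integral_prod_left'
  have MP2 : MeasurePreserving (fun ω : Fin (n+1) → α => fun j => ω (i.succAbove j)) π π' := by
    have hsnd : MeasurePreserving (Prod.snd) (ν.prod π') π' :=
      ⟨measurable_snd, Measure.snd_prod⟩
    exact hsnd.comp MP
  have h3 : ∫ ω', G ω' ∂π' = ∫ ω, G (fun j => ω (i.succAbove j)) ∂π := by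
    rw [← MP2.map_eq, integral_map MP2.aemeasurable hGsm.aestronglyMeasurable]
  have h4 : ∀ ω : Fin (n+1) → α, G (fun j => ω (i.succAbove j)) = ∫ y, f (Function.update ω i y) ∂ν := by
    intro ω
    refine integral_congr_ae (Filter.Eventually.of_forall fun y => ?_)
    have : e.symm (y, fun j => ω (i.succAbove j)) = Function.update ω i y := by
      have := aux_insertNth_comp n i y ω
      exact this
    simp [F, this]
  rw [h1, h2, h3]
  exact integral_congr_ae (Filter.Eventually.of_forall fun ω => h4 ω)

lemma aux_zero_term {α : Type*} [MeasurableSpace α] (ν : Measure α) [IsProbabilityMeasure ν]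
    {k n : ℕ} (h : (Fin k → α) → ℝ) (hm : Measurable h) (M : ℝ) (hb : ∀ x, |h x| ≤ M)
    (hz : ∀ (t : Fin k) (x : Fin k → α), ∫ y, h (Function.update x t y) ∂ν = 0)
    (j j' : Fin k → Fin (n+1)) (i : Fin (n+1)) (t : Fin k)
    (ht : j t = i) (h1 : ∀ s, s ≠ t → j s ≠ i) (h2 : ∀ s, j' s ≠ i) :
    ∫ ω : Fin (n+1) → α, h (fun s => ω (j s)) * h (fun s => ω (j' s))
      ∂(Measure.pi fun _ : Fin (n+1) => ν) = 0 := by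
  have hαne : Nonempty α := by
    by_contra hne
    rw [not_nonempty_iff] at hne
    have : ν Set.univ = 1 := measure_univ
    rw [Set.univ_eq_empty_iff.2 hne, measure_empty] at this
    exact zero_ne_one this
  have hM0 : 0 ≤ M := le_trans (abs_nonneg _) (hb fun _ => Classical.arbitrary α)
  set f : (Fin (n+1) → α) → ℝ := fun ω => h (fun s => ω (j s)) * h (fun s => ω (j' s)) with hf
  have hmj : Measurable fun ω : Fin (n+1) → α => (fun s => ω (j s)) :=
    measurable_pi_lambda _ fun s => measurable_pi_apply (j s)
  have hmj' : Measurable fun ω : Fin (n+1) → α => (fun s => ω (j' s)) :=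
    measurable_pi_lambda _ fun s => measurable_pi_apply (j' s)
  have hfm : Measurable f := (hm.comp hmj).mul (hm.comp hmj')
  have hfb : ∀ ω, |f ω| ≤ M ^ 2 := by
    intro ω
    rw [hf, abs_mul, sq]
    exact mul_le_mul (hb _) (hb _) (abs_nonneg _) hM0
  rw [aux_pi_integral_update ν i f hfm (M ^ 2) hfb]
  have key : ∀ ω : Fin (n+1) → α, (∫ y, f (Function.update ω i y) ∂ν) = 0 := by
    intro ω
    have heq : ∀ y : α, f (Function.update ω i y)
        = h (Function.update (fun s => ω (j s)) t y) * h (fun s => ω (j' s)) := by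
      intro y
      have e1 : (fun s => Function.update ω i y (j s))
          = Function.update (fun s => ω (j s)) t y := by
        funext s
        rcases eq_or_ne s t with rfl | hst
        · rw [ht, Function.update_self, Function.update_self]
        · rw [Function.update_of_ne (h1 s hst), Function.update_of_ne hst]
      have e2 : (fun s => Function.update ω i y (j' s)) = fun s => ω (j' s) := by
        funext s
        rw [Function.update_of_ne (h2 s)]
      simp only [f, e1, e2]
    calc (∫ y, f (Function.update ω i y) ∂ν)
        = ∫ y, h (Function.update (fun s => ω (j s)) t y) * h (fun s => ω (j' s)) ∂ν :=
          integral_congr_ae (Filter.Eventually.of_forall heq)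
      _ = (∫ y, h (Function.update (fun s => ω (j s)) t y) ∂ν) * h (fun s => ω (j' s)) :=
          integral_mul_const _ _
      _ = 0 := by rw [hz t (fun s => ω (j s)), zero_mul]
  calc (∫ ω, (∫ y, f (Function.update ω i y) ∂ν) ∂(Measure.pi fun _ : Fin (n+1) => ν))
      = ∫ _ω, (0:ℝ) ∂(Measure.pi fun _ : Fin (n+1) => ν) :=
        integral_congr_ae (Filter.Eventually.of_forall key)
    _ = 0 := integral_zero _ _

lemma aux_card_image_le {k n : ℕ} (J : Fin k ⊕ Fin k → Fin n)
    (hgood : ∀ s, ∃ s', s' ≠ s ∧ J s' = J s) :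
    (Finset.univ.image J).card ≤ k := by
  have hsum : (Finset.univ : Finset (Fin k ⊕ Fin k)).card
      = ∑ i ∈ Finset.univ.image J, (Finset.univ.filter fun s => J s = i).card :=
    Finset.card_eq_sum_card_fiberwise fun x _ =>
      Finset.mem_image.2 ⟨x, Finset.mem_univ x, rfl⟩
  have hcard : (Finset.univ : Finset (Fin k ⊕ Fin k)).card = k + k := by
    simp [Fintype.card_sum]
  have hfib : ∀ i ∈ Finset.univ.image J, 2 ≤ (Finset.univ.filter fun s => J s = i).card := by
    intro i hi
    obtain ⟨s, _, rfl⟩ := Finset.mem_image.1 hi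
    obtain ⟨s', hne, heq⟩ := hgood s
    have hsub : ({s', s} : Finset (Fin k ⊕ Fin k)) ⊆ Finset.univ.filter fun x => J x = J s := by
      intro x hx
      rcases Finset.mem_insert.1 hx with rfl | hx
      · exact Finset.mem_filter.2 ⟨Finset.mem_univ _, heq⟩
      · rw [Finset.mem_singleton.1 hx]
        exact Finset.mem_filter.2 ⟨Finset.mem_univ _, rfl⟩
    calc 2 = ({s', s} : Finset (Fin k ⊕ Fin k)).card := (Finset.card_pair hne).symm
      _ ≤ _ := Finset.card_le_card hsub
  have h2 : 2 * (Finset.univ.image J).card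
      ≤ ∑ i ∈ Finset.univ.image J, (Finset.univ.filter fun s => J s = i).card := by
    rw [two_mul]
    calc (Finset.univ.image J).card + (Finset.univ.image J).card
        = ∑ _i ∈ Finset.univ.image J, 2 := by rw [Finset.sum_const, smul_eq_mul]; omega
      _ ≤ _ := Finset.sum_le_sum hfib
  omega

lemma aux_count {k n : ℕ} (hk : 0 < k) :
    ((Finset.univ : Finset (Fin k ⊕ Fin k → Fin n)).filter
        fun J => (Finset.univ.image J).card ≤ k).card
      ≤ n ^ k * k ^ (k + k) := by
  classical
  set Φ : (Fin k ⊕ Fin k → Fin n) → (Fin k → Fin n) × (Fin k ⊕ Fin k → Fin k) :=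
    fun J =>
      (fun i : Fin k => if h : (i : ℕ) < (Finset.univ.image J).card
          then ((Finset.univ.image J).orderIsoOfFin rfl ⟨i, h⟩ : Fin n)
          else J (Sum.inl ⟨0, hk⟩),
       fun s => ⟨((((Finset.univ.image J).orderIsoOfFin rfl).symm
            ⟨J s, Finset.mem_image.2 ⟨s, Finset.mem_univ s, rfl⟩⟩ : Fin _) : ℕ) % k,
          Nat.mod_lt _ hk⟩) with hΦ
  have hrec : ∀ J : Fin k ⊕ Fin k → Fin n, (Finset.univ.image J).card ≤ k →
      ∀ s, (Φ J).1 ((Φ J).2 s) = J s := by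
    intro J hJ s
    set S := Finset.univ.image J with hS
    set idx := (S.orderIsoOfFin rfl).symm
      ⟨J s, Finset.mem_image.2 ⟨s, Finset.mem_univ s, rfl⟩⟩ with hidx
    have hlt : (idx : ℕ) < S.card := idx.isLt
    have hmod : (idx : ℕ) % k = (idx : ℕ) := Nat.mod_eq_of_lt (lt_of_lt_of_le hlt hJ)
    simp only [hΦ, hmod]
    change (if h : (idx : ℕ) % k < S.card then ((S.orderIsoOfFin rfl ⟨(idx : ℕ) % k, h⟩ : Fin n)) else J (Sum.inl ⟨0, hk⟩)) = J s
    simp only [hmod]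
    rw [dif_pos hlt]
    have : (S.orderIsoOfFin rfl) ⟨(idx : ℕ), hlt⟩ = ⟨J s, Finset.mem_image.2 ⟨s, Finset.mem_univ s, rfl⟩⟩ := by
      rw [show (⟨(idx : ℕ), hlt⟩ : Fin S.card) = idx from rfl, hidx]
      exact (S.orderIsoOfFin rfl).apply_symm_apply _
    rw [this]
  have hinj : Set.InjOn Φ ((Finset.univ : Finset (Fin k ⊕ Fin k → Fin n)).filter
      fun J => (Finset.univ.image J).card ≤ k) := by
    intro J1 h1 J2 h2 heq
    have hJ1 := (Finset.mem_filter.1 h1).2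
    have hJ2 := (Finset.mem_filter.1 h2).2
    funext s
    rw [← hrec J1 hJ1 s, ← hrec J2 hJ2 s, heq]
  calc ((Finset.univ : Finset (Fin k ⊕ Fin k → Fin n)).filter
        fun J => (Finset.univ.image J).card ≤ k).card
      ≤ (Finset.univ : Finset ((Fin k → Fin n) × (Fin k ⊕ Fin k → Fin k))).card :=
        Finset.card_le_card_of_injOn Φ (fun _ _ => Finset.mem_univ _) hinj
    _ = n ^ k * k ^ (k + k) := by
        simp [Fintype.card_prod, Fintype.card_fun, Fintype.card_sum]

/-- Second moment of a completely degenerate multilinear empirical integral: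
there is a constant `C` depending only on `k` such that for any probability
measure `ν`, any bounded measurable `h : Ξᵏ → ℝ` with zero marginal means
(`∫ h(x₁,…,x_k) dν(x_t) = 0` in each coordinate `t`), and i.i.d. data
`X₁,…,Xₙ ∼ ν`, one has
`E[(∫ h d(F̂ₙ)^{⊗k})²] = E[((1/nᵏ) Σ_{j₁,…,j_k} h(X_{j₁},…,X_{j_k}))²]
  ≤ C·‖h‖∞²·n^{−k}`. -/
theorem degenerate_empirical_integral_second_moment
    {α : Type*} [MeasurableSpace α] (k : ℕ) (hk : 0 < k) :
    ∃ C : ℝ, 0 < C ∧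
      ∀ (ν : Measure α), IsProbabilityMeasure ν →
      ∀ (h : (Fin k → α) → ℝ) (M : ℝ), Measurable h → (∀ x, |h x| ≤ M) →
      (∀ (t : Fin k) (x : Fin k → α), ∫ y, h (Function.update x t y) ∂ν = 0) →
      ∀ n : ℕ, 0 < n →
        ∫ ω : Fin n → α,
            ((1 / (n : ℝ) ^ k) * ∑ j : Fin k → Fin n, h (fun t => ω (j t))) ^ 2
            ∂(Measure.pi fun _ : Fin n => ν)
          ≤ C * M ^ 2 / (n : ℝ) ^ k := by
  classical
  have hkR : (0:ℝ) < (k : ℝ) := by exact_mod_cast hk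
  refine ⟨(k : ℝ) ^ (k + k), pow_pos hkR _, ?_⟩
  intro ν hν h M hm hb hz n hn
  obtain ⟨m, rfl⟩ := Nat.exists_eq_succ_of_ne_zero hn.ne'
  set π := Measure.pi fun _ : Fin (m+1) => ν with hπdef
  have hαne : Nonempty α := by
    by_contra hne
    rw [not_nonempty_iff] at hne
    have h1 : ν Set.univ = 1 := measure_univ
    rw [Set.univ_eq_empty_iff.2 hne, measure_empty] at h1
    exact zero_ne_one h1
  have hM0 : 0 ≤ M := le_trans (abs_nonneg _) (hb fun _ => Classical.arbitrary α)
  set g : (Fin k → Fin (m+1)) → (Fin k → Fin (m+1)) → (Fin (m+1) → α) → ℝ :=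
    fun j j' ω => h (fun t => ω (j t)) * h (fun t => ω (j' t)) with hg
  have hgm : ∀ j j', Measurable (g j j') := by
    intro j j'
    exact (hm.comp (measurable_pi_lambda _ fun t => measurable_pi_apply (j t))).mul
      (hm.comp (measurable_pi_lambda _ fun t => measurable_pi_apply (j' t)))
  have hgb : ∀ j j' ω, |g j j' ω| ≤ M ^ 2 := by
    intro j j' ω
    rw [hg, abs_mul, sq]
    exact mul_le_mul (hb _) (hb _) (abs_nonneg _) hM0
  have hgint : ∀ j j', Integrable (g j j') π := fun j j' =>
    aux_integrable_of_bound _ _ (hgm j j') (M ^ 2) (hgb j j')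
  set c : ℝ := 1 / ((m+1 : ℕ) : ℝ) ^ k with hc
  have expand : ∫ ω, (c * ∑ j : Fin k → Fin (m+1), h (fun t => ω (j t))) ^ 2 ∂π
      = c ^ 2 * ∑ j : Fin k → Fin (m+1), ∑ j' : Fin k → Fin (m+1), ∫ ω, g j j' ω ∂π := by
    have e1 : ∀ ω : Fin (m+1) → α,
        (c * ∑ j : Fin k → Fin (m+1), h (fun t => ω (j t))) ^ 2
        = c ^ 2 * ∑ j : Fin k → Fin (m+1), ∑ j' : Fin k → Fin (m+1), g j j' ω := by
      intro ω
      rw [mul_pow, sq (∑ j : Fin k → Fin (m+1), h (fun t => ω (j t))),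
        Finset.sum_mul_sum]
    rw [integral_congr_ae (Filter.Eventually.of_forall e1), integral_const_mul,
      integral_finset_sum _ (fun j _ => integrable_finset_sum _ fun j' _ => hgint j j')]
    congr 1
    refine Finset.sum_congr rfl fun j _ => ?_
    exact integral_finset_sum _ fun j' _ => hgint j j'
  have hTle : ∀ j j', ∫ ω, g j j' ω ∂π ≤ M ^ 2 := by
    intro j j'
    calc ∫ ω, g j j' ω ∂π ≤ ∫ _ω, M ^ 2 ∂π := by
          refine integral_mono (hgint j j') (integrable_const _) fun ω => ?_
          exact le_trans (le_abs_self _) (hgb j j' ω)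
      _ = M ^ 2 := by simp [hπdef]
  set Good : (Fin k → Fin (m+1)) × (Fin k → Fin (m+1)) → Prop :=
    fun p => ∀ s : Fin k ⊕ Fin k, ∃ s', s' ≠ s ∧ Sum.elim p.1 p.2 s' = Sum.elim p.1 p.2 s
    with hGood
  have hTzero : ∀ p : (Fin k → Fin (m+1)) × (Fin k → Fin (m+1)),
      ¬ Good p → ∫ ω, g p.1 p.2 ω ∂π = 0 := by
    rintro ⟨j, j'⟩ hp
    have hp' : ∃ s : Fin k ⊕ Fin k, ∀ s', s' ≠ s → Sum.elim j j' s' ≠ Sum.elim j j' s := by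
      by_contra hcon
      push_neg at hcon
      exact hp fun s => by
        obtain ⟨s', h1, h2⟩ := hcon s
        exact ⟨s', h1, h2⟩
    obtain ⟨s, hs'⟩ := hp'
    cases s with
    | inl t =>
      refine aux_zero_term ν h hm M hb hz j j' (j t) t rfl ?_ ?_
      · intro u hu
        exact hs' (Sum.inl u) (by simpa using hu)
      · intro u
        exact hs' (Sum.inr u) (by simp)
    | inr t =>
      have : ∫ ω, g j j' ω ∂π = ∫ ω, g j' j ω ∂π := by
        refine integral_congr_ae (Filter.Eventually.of_forall fun ω => ?_)
        rw [hg]; ring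
      rw [this]
      refine aux_zero_term ν h hm M hb hz j' j (j' t) t rfl ?_ ?_
      · intro u hu
        exact hs' (Sum.inr u) (by simpa using hu)
      · intro u
        exact hs' (Sum.inl u) (by simp)
  have hcard : ((Finset.univ : Finset ((Fin k → Fin (m+1)) × (Fin k → Fin (m+1)))).filter
        Good).card ≤ (m+1) ^ k * k ^ (k + k) := by
    refine le_trans (Finset.card_le_card_of_injOn (fun p => Sum.elim p.1 p.2) ?_ ?_)
      (aux_count hk)
    · rintro ⟨j, j'⟩ hp
      rw [Finset.mem_coe, Finset.mem_filter] at hp ⊢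
      exact ⟨Finset.mem_univ _, aux_card_image_le _ hp.2⟩
    · rintro ⟨j1, j1'⟩ _ ⟨j2, j2'⟩ _ heq
      have h1 : j1 = j2 := funext fun t => congrFun heq (Sum.inl t)
      have h2 : j1' = j2' := funext fun t => congrFun heq (Sum.inr t)
      rw [Prod.mk.injEq]; exact ⟨h1, h2⟩
  have hsumle : ∑ j : Fin k → Fin (m+1), ∑ j' : Fin k → Fin (m+1), ∫ ω, g j j' ω ∂π
      ≤ ((m+1) ^ k * k ^ (k + k) : ℕ) * M ^ 2 := by
    rw [← Finset.sum_product']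
    calc ∑ p ∈ Finset.univ ×ˢ Finset.univ, ∫ ω, g p.1 p.2 ω ∂π
        = ∑ p ∈ (Finset.univ ×ˢ Finset.univ).filter Good, ∫ ω, g p.1 p.2 ω ∂π
          + ∑ p ∈ (Finset.univ ×ˢ Finset.univ).filter (fun p => ¬ Good p), ∫ ω, g p.1 p.2 ω ∂π :=
          (Finset.sum_filter_add_sum_filter_not _ _ _).symm
      _ = ∑ p ∈ (Finset.univ ×ˢ Finset.univ).filter Good, ∫ ω, g p.1 p.2 ω ∂π := by
          rw [Finset.sum_eq_zero fun p hp => hTzero p (Finset.mem_filter.1 hp).2, add_zero]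
      _ ≤ ((Finset.univ ×ˢ Finset.univ).filter Good).card • M ^ 2 :=
          Finset.sum_le_card_nsmul _ _ _ fun p _ => hTle p.1 p.2
      _ ≤ ((m+1) ^ k * k ^ (k + k) : ℕ) * M ^ 2 := by
          rw [nsmul_eq_mul]
          refine mul_le_mul_of_nonneg_right ?_ (sq_nonneg M)
          rw [Finset.univ_product_univ]
          exact_mod_cast hcard
  have hfin : c ^ 2 * (((m+1) ^ k * k ^ (k + k) : ℕ) * M ^ 2)
      = (k : ℝ) ^ (k + k) * M ^ 2 / ((m+1 : ℕ) : ℝ) ^ k := by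
    have hpos : (0:ℝ) < ((m+1 : ℕ) : ℝ) ^ k := by positivity
    rw [hc]
    push_cast
    field_simp
  calc ∫ ω : Fin (m+1) → α,
        ((1 / ((m+1 : ℕ) : ℝ) ^ k) * ∑ j : Fin k → Fin (m+1), h (fun t => ω (j t))) ^ 2 ∂π
      = c ^ 2 * ∑ j : Fin k → Fin (m+1), ∑ j' : Fin k → Fin (m+1), ∫ ω, g j j' ω ∂π := expand
    _ ≤ c ^ 2 * (((m+1) ^ k * k ^ (k + k) : ℕ) * M ^ 2) :=
        mul_le_mul_of_nonneg_left hsumle (sq_nonneg c)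
    _ = (k : ℝ) ^ (k + k) * M ^ 2 / ((m+1 : ℕ) : ℝ) ^ k := hfin
end
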